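/- The 5-dimensional complex associative algebra μ₂ (products e₁e₁=e₂, e₁e₂=e₃, e₂e₁=e₃, e₄e₁=e₅, e₄e₄=e₃) degenerates to μ₁ (products e₁e₁=e₂, e₁e₂=e₃, e₂e₁=e₃, e₄e₁=e₅) via the parametric basis (e₁, e₂, e₃, t e₄, t e₅). -/
import Mathlib


open Module Filter Topology

/-- Structure constants of the associative algebra `μ₂` (basis `e₁,…,e₅`, 0-indexed):
`e₁e₁=e₂, e₁e₂=e₃, e₂e₁=e₃, e₄e₁=e₅, e₄e₄=e₃`. -/
noncomputable def cA : Fin 5 → Fin 5 → Fin 5 → ℂ := fun i j m =>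
  if i = 0 ∧ j = 0 ∧ m = 1 then 1
  else if i = 0 ∧ j = 1 ∧ m = 2 then 1
  else if i = 1 ∧ j = 0 ∧ m = 2 then 1
  else if i = 3 ∧ j = 0 ∧ m = 4 then 1
  else if i = 3 ∧ j = 3 ∧ m = 2 then 1
  else 0

/-- Structure constants of the algebra `μ₁`:
`e₁e₁=e₂, e₁e₂=e₃, e₂e₁=e₃, e₄e₁=e₅`. -/
noncomputable def cB : Fin 5 → Fin 5 → Fin 5 → ℂ := fun i j m =>
  if i = 0 ∧ j = 0 ∧ m = 1 then 1
  else if i = 0 ∧ j = 1 ∧ m = 2 then 1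
  else if i = 1 ∧ j = 0 ∧ m = 2 then 1
  else if i = 3 ∧ j = 0 ∧ m = 4 then 1
  else 0

/-- The multiplication of `μ₂` on `ℂ⁵`. -/
noncomputable def mulA (x y : Fin 5 → ℂ) : Fin 5 → ℂ :=
  fun m => ∑ i, ∑ j, x i * y j * cA i j m

/-- The parametric basis `(e₁, e₂, e₃, t e₄, t e₅)`. -/
noncomputable def E (t : ℂ) : Fin 5 → (Fin 5 → ℂ) :=
  fun i => (![1, 1, 1, t, t] i) • (Pi.single i 1 : Fin 5 → ℂ)

lemma mulA_single (a b : ℂ) (i j : Fin 5) :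
    mulA (a • (Pi.single i 1 : Fin 5 → ℂ)) (b • (Pi.single j 1 : Fin 5 → ℂ))
      = fun m => a * b * cA i j m := by
  funext m
  simp [mulA, Pi.single_apply, mul_ite, ite_mul, Finset.sum_ite_eq, Finset.sum_ite_eq']

set_option maxHeartbeats 2000000 in
/-- `μ₂` degenerates to `μ₁` via the parametric basis
`(e₁, e₂, e₃, t e₄, t e₅)`: for every `t ≠ 0` the family `Eᵗ` is a basis, and the
structure constants of `μ₂` in this basis converge, as `t → 0`, to those of `μ₁`. -/
theorem mu2_degenerates_to_mu1 :
    ∃ c : ℂ → Fin 5 → Fin 5 → Fin 5 → ℂ,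
      (∀ t : ℂ, t ≠ 0 → LinearIndependent ℂ (E t) ∧
        ∀ i j : Fin 5, mulA (E t i) (E t j) = ∑ m, c t i j m • E t m) ∧
      (∀ i j m : Fin 5,
        Tendsto (fun t => c t i j m) (𝓝[≠] (0 : ℂ)) (𝓝 (cB i j m))) := by
  classical
  refine ⟨fun t i j m => if i = 3 ∧ j = 3 ∧ m = 2 then t ^ 2 else cB i j m, ?_, ?_⟩
  · intro t ht
    constructor
    · have hb : LinearIndependent ℂ (fun i : Fin 5 => (Pi.single i 1 : Fin 5 → ℂ)) := by
        have h1 := (Pi.basisFun ℂ (Fin 5)).linearIndependent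
        have he : ⇑(Pi.basisFun ℂ (Fin 5)) = fun i => (Pi.single i 1 : Fin 5 → ℂ) := by
          funext i; exact Pi.basisFun_apply ℂ (Fin 5) i
        rwa [he] at h1
      have := hb.units_smul (w := fun i => if i = 3 ∨ i = 4 then Units.mk0 t ht else 1)
      convert this using 1
      funext i
      fin_cases i <;> simp [E]
    · intro i j
      have hE : ∀ m : Fin 5, E t m = (![1, 1, 1, t, t] m) • (Pi.single m 1 : Fin 5 → ℂ) :=
        fun m => rfl
      rw [hE i, hE j, mulA_single]
      funext k
      have hrhs : (∑ m, (if i = 3 ∧ j = 3 ∧ m = 2 then t ^ 2 else cB i j m) • E t m) k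
          = (if i = 3 ∧ j = 3 ∧ k = 2 then t ^ 2 else cB i j k) * (![1, 1, 1, t, t] k) := by
        simp only [Finset.sum_apply, Pi.smul_apply, E, Pi.single_apply,
          smul_eq_mul, Fin.sum_univ_five]
        fin_cases k <;> simp
      rw [hrhs]
      fin_cases i <;> fin_cases j <;> fin_cases k <;>
        simp [cA, cB] <;> ring
  · intro i j m
    by_cases h : i = 3 ∧ j = 3 ∧ m = 2
    · obtain ⟨hi, hj, hm⟩ := h
      subst hi; subst hj; subst hm
      simp only [and_self, if_true, cB]
      norm_num
      exact tendsto_nhdsWithin_of_tendsto_nhds (by simpa using ((continuous_pow 2).tendsto (0:ℂ)))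
    · simp only [h, if_false]
      exact tendsto_const_nhds
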